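/- Let X be a subspace of F_q^n of dimension k̃ and W the row space of the block matrix [[τ(U), φ_{τ(V)}(F)],[0, τ(V)]] for U a k'-dimensional subspace of F_q^{n'}, V a (k-k')-dimensional subspace of F_q^{n-n'}, and F a k'×(n-n'-k+k') matrix. Let s be the number of pivots of τ(X) among the first n' columns. If d ≤ |s - k'| + |k̃ - s - (k - k')|, then d_S(X, W) ≥ d. -/

import Mathlib

open Module

/-- A full-rank `k × n` matrix is in reduced row echelon form with pivot columns
given by the strictly increasing list `c` if the pivot columns form an identity
submatrix and all entries to the left of each pivot are zero. -/
def IsRRE {F : Type*} [Field F] {k n : ℕ} (A : Matrix (Fin k) (Fin n) F)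
    (c : Fin k → Fin n) : Prop :=
  StrictMono c ∧ (∀ i j, A i (c j) = if j = i then 1 else 0) ∧
    (∀ (i : Fin k) (j : Fin n), (j : ℕ) < (c i : ℕ) → A i j = 0)

/-- The row space of a matrix: the span of its rows. -/
def rowSpace {F : Type*} [Field F] {k n : ℕ} (A : Matrix (Fin k) (Fin n) F) :
    Submodule F (Fin n → F) :=
  Submodule.span F (Set.range fun i => A i)

open scoped Classical in
/-- `insertZeroCols c M` is `φ_B(M)`: the matrix obtained from `M` by inserting zero
columns at the pivot positions (given by `c`) of a full-rank RRE matrix `B` with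
`kb` rows and `nb` columns. -/
noncomputable def insertZeroCols {F : Type*} [Field F] {k' kb nb : ℕ}
    (c : Fin kb → Fin nb) (M : Matrix (Fin k') (Fin (nb - kb)) F) :
    Matrix (Fin k') (Fin nb) F :=
  Matrix.of fun i j =>
    if ∃ t, c t = j then 0
    else if h : (j : ℕ) - (Finset.univ.filter fun t : Fin kb => (c t : ℕ) ≤ (j : ℕ)).card
        < nb - kb then
      M i ⟨_, h⟩
    else 0

/-- The subspace distance `d_S(U,W) = dim U + dim W - 2 dim (U ⊓ W)`. -/
noncomputable def subspaceDist {F : Type*} [Field F] {V : Type*} [AddCommGroup V]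
    [Module F V] (U W : Submodule F V) : ℕ :=
  finrank F U + finrank F W - 2 * finrank F ↥(U ⊓ W)

/-- Row space of a matrix with arbitrary row and column index types. -/
def rowSpace' {F : Type*} [Field F] {ρ ι : Type*} (A : Matrix ρ ι F) :
    Submodule F (ι → F) :=
  Submodule.span F (Set.range fun i => A i)

lemma lead_mem_pivots {F : Type*} [Field F] {ι : Type*} [Fintype ι] [DecidableEq ι] {N : ℕ}
    (R : Matrix ι (Fin N) F) (c : ι → Fin N)
    (hδ : ∀ i j, R i (c j) = if j = i then 1 else 0)
    (hz : ∀ (i : ι) (j : Fin N), (j : ℕ) < (c i : ℕ) → R i j = 0)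
    (v : Fin N → F) (hv : v ∈ rowSpace' R) (hv0 : v ≠ 0) :
    ∃ i, v (c i) ≠ 0 ∧ ∀ j : Fin N, (j : ℕ) < (c i : ℕ) → v j = 0 := by
  classical
  rw [rowSpace', Submodule.mem_span_range_iff_exists_fun] at hv
  obtain ⟨a, ha⟩ := hv
  have hTne : (Finset.univ.filter fun i => a i ≠ 0).Nonempty := by
    by_contra h
    rw [Finset.not_nonempty_iff_eq_empty, Finset.filter_eq_empty_iff] at h
    apply hv0
    funext j
    rw [← ha]
    simp only [Finset.sum_apply, Pi.smul_apply, smul_eq_mul, Pi.zero_apply]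
    apply Finset.sum_eq_zero
    intro i hi
    have := h hi
    push_neg at this
    simp [this]
  obtain ⟨i0, hi0mem, hi0min⟩ := Finset.exists_min_image _ (fun i => (c i : ℕ)) hTne
  have hva : ∀ j, v j = ∑ i, a i * R i j := by
    intro j
    rw [← ha]
    simp [Finset.sum_apply]
  refine ⟨i0, ?_, ?_⟩
  · rw [hva]
    have : ∀ i, a i * R i (c i0) = if i = i0 then a i0 else 0 := by
      intro i
      rw [hδ]
      by_cases h : i0 = i <;> simp [h, eq_comm]
    simp only [this]
    rw [Finset.sum_ite_eq' Finset.univ i0 (fun _ => a i0)]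
    simp only [Finset.mem_univ, if_true]
    simpa using (Finset.mem_filter.mp hi0mem).2
  · intro j hj
    rw [hva]
    apply Finset.sum_eq_zero
    intro i _
    by_cases hai : a i = 0
    · simp [hai]
    · have hmem : i ∈ Finset.univ.filter fun i => a i ≠ 0 := by simp [hai]
      have := hi0min i hmem
      rw [hz i j (lt_of_lt_of_le hj this), mul_zero]

lemma finrank_le_card_of_support {F : Type*} [Field F] {N : ℕ}
    (Z : Submodule F (Fin N → F)) (S : Finset (Fin N))
    (h : ∀ v ∈ Z, (∀ j ∈ S, v j = 0) → v = 0) :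
    finrank F Z ≤ S.card := by
  classical
  let f : (Fin N → F) →ₗ[F] ((↥S : Type) → F) :=
    LinearMap.funLeft F F (fun j => (j : Fin N))
  have hinj : Function.Injective (f.comp Z.subtype) := by
    rw [← LinearMap.ker_eq_bot, LinearMap.ker_eq_bot']
    intro m hm
    have : (m : Fin N → F) = 0 := by
      apply h _ m.2
      intro j hj
      have := congrFun hm ⟨j, hj⟩
      simpa [f, LinearMap.funLeft] using this
    exact Subtype.ext this
  calc finrank F Z ≤ finrank F ((↥S : Type) → F) :=
        LinearMap.finrank_le_finrank_of_injective hinj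
    _ = S.card := by simp [Module.finrank_pi]

lemma finrank_rowSpace_of_delta {F : Type*} [Field F] {ι : Type*} [Fintype ι] [DecidableEq ι] {N : ℕ}
    (R : Matrix ι (Fin N) F) (c : ι → Fin N)
    (hδ : ∀ i j, R i (c j) = if j = i then 1 else 0) :
    finrank F (rowSpace' R) = Fintype.card ι := by
  classical
  apply finrank_span_eq_card
  rw [Fintype.linearIndependent_iff]
  intro g hg i
  have := congrFun hg (c i)
  simp only [Finset.sum_apply, Pi.smul_apply, smul_eq_mul, Pi.zero_apply] at this
  have heq : ∀ j, g j * R j (c i) = if j = i then g i else 0 := by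
    intro j
    rw [hδ]
    by_cases h : i = j <;> simp [h, eq_comm]
  rw [Finset.sum_congr rfl (fun j _ => heq j)] at this
  rwa [Finset.sum_ite_eq' Finset.univ i (fun _ => g i), if_pos (Finset.mem_univ i)] at this

lemma rowSpace'_map {F : Type*} [Field F] {ρ α β : Type*} (e : α ≃ β) (R : Matrix ρ β F) :
    Submodule.map ((LinearEquiv.funCongrLeft F F e : (β → F) ≃ₗ[F] (α → F)) :
        (β → F) →ₗ[F] (α → F)) (rowSpace' R)
      = rowSpace' (Matrix.of fun i j => R i (e j)) := by
  rw [rowSpace', rowSpace', Submodule.map_span, ← Set.range_comp]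
  rfl


/-- Multilevel coset construction compatibility: if `X` is a `k̃`-dimensional
subspace whose RRE generator matrix has exactly `s` pivots among the first `n'`
columns, `W` is the row space of `[[τ(U), φ_{τ(V)}(F)],[0, τ(V)]]` and
`d ≤ |s - k'| + |k̃ - s - (k - k')|`, then `d_S(X, W) ≥ d`. -/
theorem coset_multilevel_dist {F : Type*} [Field F] [Fintype F] {n k n' k' kt d : ℕ}
    (hk : 1 ≤ k) (hkn : 2 * k ≤ n) (hk' : 1 ≤ k') (hk'n' : k' ≤ n')
    (hkk' : 1 ≤ k - k') (hkn' : k - k' ≤ n - n') (hkt : kt ≤ n)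
    (A : Matrix (Fin k') (Fin n') F) (ca : Fin k' → Fin n') (hA : IsRRE A ca)
    (B : Matrix (Fin (k - k')) (Fin (n - n')) F) (cb : Fin (k - k') → Fin (n - n'))
    (hB : IsRRE B cb)
    (M : Matrix (Fin k') (Fin ((n - n') - (k - k'))) F)
    (X : Submodule F ((Fin n' ⊕ Fin (n - n')) → F))
    (MX : Matrix (Fin kt) (Fin (n' + (n - n'))) F) (cX : Fin kt → Fin (n' + (n - n')))
    (hMX : IsRRE MX cX)
    (hXspan : X = rowSpace'
      ((Matrix.reindex (Equiv.refl (Fin kt)) finSumFinEquiv.symm) MX))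
    (hXdim : finrank F X = kt)
    (s : ℕ) (hs : s = (Finset.univ.filter fun i => (cX i : ℕ) < n').card)
    (hd : (d : ℤ) ≤ |(s : ℤ) - (k' : ℤ)| + |(kt : ℤ) - (s : ℤ) - ((k - k' : ℕ) : ℤ)|) :
    d ≤ subspaceDist X
      (rowSpace' (Matrix.fromBlocks A (insertZeroCols cb M) 0 B)) := by
  classical
  set W0 : Matrix (Fin k' ⊕ Fin (k - k')) (Fin n' ⊕ Fin (n - n')) F :=
    Matrix.fromBlocks A (insertZeroCols cb M) 0 B with hW0
  set Φ : (Fin (n' + (n - n')) → F) ≃ₗ[F] ((Fin n' ⊕ Fin (n - n')) → F) :=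
    LinearEquiv.funCongrLeft F F finSumFinEquiv with hΦ
  set RW : Matrix (Fin k' ⊕ Fin (k - k')) (Fin (n' + (n - n'))) F :=
    Matrix.of fun i j => W0 i (finSumFinEquiv.symm j) with hRW
  set cW : (Fin k' ⊕ Fin (k - k')) → Fin (n' + (n - n')) :=
    Sum.elim (fun i => finSumFinEquiv (Sum.inl (ca i)))
      (fun i => finSumFinEquiv (Sum.inr (cb i))) with hcW
  -- pivot structure of RW
  have hδW : ∀ i j, RW i (cW j) = if j = i then 1 else 0 := by
    rintro (i | i) (j | j) <;>
      simp only [hRW, hcW, Matrix.of_apply, Sum.elim_inl, Sum.elim_inr,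
        Equiv.symm_apply_apply, hW0, Matrix.fromBlocks_apply₁₁, Matrix.fromBlocks_apply₁₂,
        Matrix.fromBlocks_apply₂₁, Matrix.fromBlocks_apply₂₂]
    · rw [hA.2.1]
      simp [Sum.inl.injEq]
    · rw [show insertZeroCols cb M i (cb j) = 0 by
        simp only [insertZeroCols, Matrix.of_apply]; rw [if_pos ⟨j, rfl⟩]]
      simp
    · simp
    · rw [hB.2.1]
      simp [Sum.inr.injEq]
  have hzW : ∀ (i : Fin k' ⊕ Fin (k - k')) (j : Fin (n' + (n - n'))),
      (j : ℕ) < (cW i : ℕ) → RW i j = 0 := by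
    intro i j hj
    obtain ⟨j', rfl⟩ := finSumFinEquiv.surjective j
    have hRWj : RW i (finSumFinEquiv j') = W0 i j' := by simp [hRW]
    rw [hRWj]
    rcases i with i | i <;> rcases j' with j0 | j0 <;>
      simp only [hcW, Sum.elim_inl, Sum.elim_inr, finSumFinEquiv_apply_left,
        finSumFinEquiv_apply_right, Fin.coe_castAdd, Fin.coe_natAdd] at hj <;>
      simp only [hW0, Matrix.fromBlocks_apply₁₁, Matrix.fromBlocks_apply₁₂,
        Matrix.fromBlocks_apply₂₁, Matrix.fromBlocks_apply₂₂]
    · exact hA.2.2 i j0 hj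
    · exact absurd hj (by have := (ca i).isLt; omega)
    · simp
    · exact hB.2.2 i j0 (by omega)
  -- transporting the spaces
  have hXmap : X = Submodule.map (Φ : (Fin (n' + (n - n')) → F) →ₗ[F] _) (rowSpace' MX) := by
    have hmx : (Matrix.reindex (Equiv.refl (Fin kt)) finSumFinEquiv.symm) MX
        = Matrix.of fun i j => MX i (finSumFinEquiv j) := by
      ext i j
      simp [Matrix.reindex_apply]
    rw [hXspan, hmx, hΦ, rowSpace'_map]
  have hWmap : rowSpace' W0
      = Submodule.map (Φ : (Fin (n' + (n - n')) → F) →ₗ[F] _) (rowSpace' RW) := by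
    have hrw : W0 = Matrix.of fun i j => RW i (finSumFinEquiv j) := by
      ext i j
      simp [hRW]
    rw [hΦ, rowSpace'_map, ← hrw]
  -- dimension of W
  have hcardsum : Fintype.card (Fin k' ⊕ Fin (k - k')) = k' + (k - k') := by simp
  have hWdim : finrank F (rowSpace' W0) = k' + (k - k') := by
    rw [hWmap, LinearEquiv.finrank_map_eq, finrank_rowSpace_of_delta RW cW hδW, hcardsum]
  -- the pivot intersection set
  set SX : Finset (Fin (n' + (n - n'))) := Finset.univ.image cX with hSX
  set SW : Finset (Fin (n' + (n - n'))) := Finset.univ.image cW with hSW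
  set S : Finset (Fin (n' + (n - n'))) := SX ∩ SW with hSdef
  set p : Fin (n' + (n - n')) → Prop := fun j => (j : ℕ) < n' with hp
  have hcXinj : Function.Injective cX := hMX.1.injective
  have hSXp : (SX.filter p).card = s := by
    rw [hSX, Finset.filter_image, Finset.card_image_of_injective _ hcXinj, hs]
  have hSXcard : SX.card = kt := by
    rw [hSX, Finset.card_image_of_injective _ hcXinj]
    simp
  have hSXnp : (SX.filter fun j => ¬ p j).card = kt - s := by
    have := Finset.card_filter_add_card_filter_not (s := SX) p
    omega
  have hc1 : (S.filter p).card ≤ s := by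
    rw [← hSXp]
    exact Finset.card_le_card (Finset.filter_subset_filter _ Finset.inter_subset_left)
  have hc3 : (S.filter fun j => ¬ p j).card ≤ kt - s := by
    rw [← hSXnp]
    exact Finset.card_le_card (Finset.filter_subset_filter _ Finset.inter_subset_left)
  have hcim1 : (Finset.univ.image (fun i : Fin k' => cW (Sum.inl i))).card ≤ k' :=
    le_trans Finset.card_image_le (by simp)
  have hcim2 : (Finset.univ.image (fun i : Fin (k - k') => cW (Sum.inr i))).card ≤ k - k' :=
    le_trans Finset.card_image_le (by simp)
  have hc2 : (S.filter p).card ≤ k' := by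
    refine le_trans (Finset.card_le_card ?_) hcim1
    intro j hj
    rw [Finset.mem_filter] at hj
    obtain ⟨hjS, hjp⟩ := hj
    have hjSW : j ∈ SW := Finset.mem_of_mem_inter_right hjS
    rw [hSW, Finset.mem_image] at hjSW
    obtain ⟨i, _, rfl⟩ := hjSW
    rcases i with i | i
    · exact Finset.mem_image.mpr ⟨i, Finset.mem_univ _, rfl⟩
    · exfalso
      have hval : (cW (Sum.inr i) : ℕ) = n' + (cb i : ℕ) := by
        simp [hcW]
      rw [hp] at hjp
      simp only [hval] at hjp
      omega
  have hc4 : (S.filter fun j => ¬ p j).card ≤ k - k' := by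
    refine le_trans (Finset.card_le_card ?_) hcim2
    intro j hj
    rw [Finset.mem_filter] at hj
    obtain ⟨hjS, hjp⟩ := hj
    have hjSW : j ∈ SW := Finset.mem_of_mem_inter_right hjS
    rw [hSW, Finset.mem_image] at hjSW
    obtain ⟨i, _, rfl⟩ := hjSW
    rcases i with i | i
    · exfalso
      have hval : (cW (Sum.inl i) : ℕ) = (ca i : ℕ) := by simp [hcW]
      have hlt := (ca i).isLt
      rw [hp] at hjp
      simp only [hval] at hjp
      omega
    · exact Finset.mem_image.mpr ⟨i, Finset.mem_univ _, rfl⟩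
  have hScard : S.card = (S.filter p).card + (S.filter fun j => ¬ p j).card :=
    (Finset.card_filter_add_card_filter_not (s := S) p).symm
  -- intersection dimension bound
  have hZ : finrank F ↥(rowSpace' MX ⊓ rowSpace' RW) ≤ S.card := by
    apply finrank_le_card_of_support
    intro v hv hvS
    by_contra hv0
    obtain ⟨i, hvi, hmin⟩ := lead_mem_pivots MX cX hMX.2.1 hMX.2.2 v hv.1 hv0
    obtain ⟨i', hvi', hmin'⟩ := lead_mem_pivots RW cW hδW hzW v hv.2 hv0
    have heq : cX i = cW i' := by
      rcases lt_trichotomy ((cX i : ℕ)) ((cW i' : ℕ)) with h | h | h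
      · exact absurd (hmin' _ h) hvi
      · exact Fin.ext h
      · exact absurd (hmin _ h) hvi'
    apply hvi
    apply hvS
    rw [hSdef, Finset.mem_inter]
    exact ⟨Finset.mem_image.mpr ⟨i, Finset.mem_univ _, rfl⟩,
      Finset.mem_image.mpr ⟨i', Finset.mem_univ _, heq.symm⟩⟩
  have hm : finrank F ↥(X ⊓ rowSpace' W0) = finrank F ↥(rowSpace' MX ⊓ rowSpace' RW) := by
    have hmapinf := Submodule.map_inf (p := rowSpace' MX) (q := rowSpace' RW)
      (Φ : (Fin (n' + (n - n')) → F) →ₗ[F] _) (by exact Φ.injective)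
    rw [hXmap, hWmap, ← hmapinf, LinearEquiv.finrank_map_eq]
  have hskt : s ≤ kt := by
    rw [hs]
    have := Finset.card_filter_le (Finset.univ : Finset (Fin kt))
      (fun i => (cX i : ℕ) < n')
    simpa using this
  rw [subspaceDist, hXdim, hWdim, hm]
  rcases abs_cases ((s : ℤ) - (k' : ℤ)) with ⟨h1, h2⟩ | ⟨h1, h2⟩ <;>
    rcases abs_cases ((kt : ℤ) - (s : ℤ) - ((k - k' : ℕ) : ℤ)) with ⟨h3, h4⟩ | ⟨h3, h4⟩ <;>
    omega
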